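/- The sequence f_n = log n (with f_0 = 0) is not holonomic: there is no nontrivial linear recurrence with polynomial coefficients p_0(n) f_{n+d} + ... + p_d(n) f_n = 0 valid for all n ≥ 0 with p_0 not identically zero. -/

import Mathlib

open Finset

/-- A sequence is holonomic (P-recursive) if it satisfies a linear recurrence
with polynomial coefficients whose leading coefficient is not identically zero. -/
def HolonomicSeq (f : ℕ → ℂ) : Prop :=
  ∃ (d : ℕ) (p : ℕ → Polynomial ℂ), p 0 ≠ 0 ∧
    ∀ n : ℕ, ∑ j ∈ Finset.range (d + 1), (p j).eval (n : ℂ) * f (n + (d - j)) = 0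

section Aux

open Filter Polynomial Topology

/-- `Real.log` is real-analytic at positive points. -/
lemma analyticAt_rlog {x : ℝ} (hx : 0 < x) : AnalyticAt ℝ Real.log x := by
  have h : (fun y : ℝ => (Complex.log (y : ℂ)).re) = Real.log :=
    funext Complex.log_ofReal_re
  rw [← h]
  have h1 : AnalyticAt ℝ (fun y : ℝ => (y : ℂ)) x := Complex.ofRealCLM.analyticAt x
  have h2 : AnalyticAt ℝ Complex.log ((x : ℝ) : ℂ) :=
    (analyticAt_clog (by simp [Complex.mem_slitPlane_iff, hx])).restrictScalars (𝕜 := ℝ)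
  have h3 : AnalyticAt ℝ (fun z : ℂ => z.re) (Complex.log ((x : ℝ) : ℂ)) :=
    Complex.reCLM.analyticAt _
  have h4 := (h3.comp h2).comp h1
  simpa [Function.comp_def] using h4

lemma polyAnalyticAt (p : Polynomial ℝ) (x : ℝ) : AnalyticAt ℝ (fun y => p.eval y) x :=
  (AnalyticOnNhd.eval_polynomial (𝕜 := ℝ) (A := ℝ) p) x trivial

lemma tendsto_inv_nat : Tendsto (fun n : ℕ => 1 / (n : ℝ)) atTop (𝓝 0) :=
  tendsto_one_div_atTop_nhds_zero_nat

lemma tendsto_log_nat : Tendsto (fun n : ℕ => Real.log n) atTop atTop :=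
  Real.tendsto_log_atTop.comp tendsto_natCast_atTop_atTop

lemma eventually_log_ne : ∀ᶠ n : ℕ in Filter.atTop, Real.log n ≠ 0 := by
  filter_upwards [Filter.eventually_ge_atTop 2] with n hn
  have : (1:ℝ) < n := by exact_mod_cast Nat.lt_of_lt_of_le one_lt_two hn
  exact ne_of_gt (Real.log_pos this)

lemma eventually_nat_ne : ∀ᶠ n : ℕ in Filter.atTop, (n : ℝ) ≠ 0 := by
  filter_upwards [Filter.eventually_ge_atTop 1] with n hn
  positivity

lemma tendsto_log_div_nat : Tendsto (fun n : ℕ => Real.log n / (n : ℝ)) atTop (𝓝 0) := by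
  have h : Tendsto (fun x : ℝ => Real.log x / x) atTop (𝓝 0) := by
    simpa using Real.isLittleO_log_id_atTop.tendsto_div_nhds_zero
  exact h.comp tendsto_natCast_atTop_atTop

/-- a polynomial whose evaluation vanishes near a point is zero -/
lemma poly_zero_of_eventually {A : Polynomial ℝ} (h : ∀ᶠ z in 𝓝 (0:ℝ), A.eval z = 0) :
    A = 0 := by
  apply Polynomial.eq_zero_of_infinite_isRoot
  obtain ⟨ε, hε, hsub⟩ := Metric.eventually_nhds_iff.mp h
  refine Set.Infinite.mono ?_ (Set.Ioo_infinite (show (0:ℝ) < ε from hε))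
  intro y hy
  have : dist y 0 < ε := by
    rw [Real.dist_eq, sub_zero, abs_of_pos hy.1]; exact hy.2
  exact hsub this

/-- Key lemma: if `A(1/n) log n + B(1/n) = 0` eventually, with `B` analytic at `0`,
then `A = 0`. -/
lemma key_lemma (A : Polynomial ℝ) (B : ℝ → ℝ) (hB : AnalyticAt ℝ B 0)
    (hrel : ∀ᶠ n : ℕ in atTop, A.eval (1 / (n : ℝ)) * Real.log n + B (1 / (n : ℝ)) = 0) :
    A = 0 := by
  by_contra hA
  have hAa : AnalyticAt ℝ (fun y => A.eval y) 0 := polyAnalyticAt A 0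
  have hAne : ¬ (∀ᶠ z in 𝓝 (0:ℝ), A.eval z = 0) := fun h => hA (poly_zero_of_eventually h)
  have horder : analyticOrderAt (fun y => A.eval y) 0 ≠ ⊤ := fun htop => hAne (analyticOrderAt_eq_top.mp htop)
  obtain ⟨k, hk⟩ := WithTop.ne_top_iff_exists.mp horder
  obtain ⟨g, hg, hg0, hgeq⟩ := (hAa.analyticOrderAt_eq_natCast (n := k)).mp hk.symm
  have hgeq' : ∀ᶠ n : ℕ in atTop, A.eval (1 / (n : ℝ)) = (1 / (n : ℝ)) ^ k * g (1 / (n : ℝ)) := by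
    filter_upwards [tendsto_inv_nat.eventually hgeq] with n hn
    simpa [smul_eq_mul] using hn
  have tg : Tendsto (fun n : ℕ => g (1 / (n : ℝ))) atTop (𝓝 (g 0)) :=
    (hg.continuousAt.tendsto).comp tendsto_inv_nat
  by_cases hBev : ∀ᶠ z in 𝓝 (0:ℝ), B z = 0
  · -- B vanishes near 0 : then A(1/n) log n = 0 with all factors nonzero
    have h1 : ∀ᶠ n : ℕ in atTop, (1 / (n : ℝ)) ^ k * g (1 / (n : ℝ)) * Real.log n = 0 := by
      filter_upwards [hrel, hgeq', tendsto_inv_nat.eventually hBev] with n h1 h2 h3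
      rw [h2, h3, add_zero] at h1; exact h1
    have h2 : ∀ᶠ n : ℕ in atTop, g (1 / (n : ℝ)) ≠ 0 := tg.eventually_ne hg0
    obtain ⟨n, h1, h2, hlog, hn0⟩ :=
      (h1.and (h2.and (eventually_log_ne.and eventually_nat_ne))).exists
    have hpk : (1 / (n : ℝ)) ^ k ≠ 0 := by positivity
    rcases mul_eq_zero.mp h1 with h | h
    · rcases mul_eq_zero.mp h with h | h
      · exact hpk h
      · exact h2 h
    · exact hlog h
  · -- B has finite order l with unit factor h
    have horderB : analyticOrderAt B 0 ≠ ⊤ := fun htop => hBev (analyticOrderAt_eq_top.mp htop)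
    obtain ⟨l, hl⟩ := WithTop.ne_top_iff_exists.mp horderB
    obtain ⟨h, hh, hh0, hheq⟩ := (hB.analyticOrderAt_eq_natCast (n := l)).mp hl.symm
    have hheq' : ∀ᶠ n : ℕ in atTop,
        B (1 / (n : ℝ)) = (1 / (n : ℝ)) ^ l * h (1 / (n : ℝ)) := by
      filter_upwards [tendsto_inv_nat.eventually hheq] with n hn
      simpa [smul_eq_mul] using hn
    have th : Tendsto (fun n : ℕ => h (1 / (n : ℝ))) atTop (𝓝 (h 0)) :=
      (hh.continuousAt.tendsto).comp tendsto_inv_nat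
    have hrel2 : ∀ᶠ n : ℕ in atTop,
        (1 / (n : ℝ)) ^ k * g (1 / (n : ℝ)) * Real.log n
          + (1 / (n : ℝ)) ^ l * h (1 / (n : ℝ)) = 0 := by
      filter_upwards [hrel, hgeq', hheq'] with n h1 h2 h3
      rw [← h2, ← h3]; exact h1
    rcases le_or_gt k l with hkl | hlk
    · -- k ≤ l : g(1/n) → 0, contradiction with g 0 ≠ 0
      have heq : ∀ᶠ n : ℕ in atTop,
          g (1 / (n : ℝ)) = -((1 / (n : ℝ)) ^ (l - k) * h (1 / (n : ℝ)) * (Real.log n)⁻¹) := by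
        filter_upwards [hrel2, eventually_log_ne, eventually_nat_ne] with n h1 hlog hn0
        have hpk : (1 / (n : ℝ)) ^ k ≠ 0 := by positivity
        have hsplit : (1 / (n : ℝ)) ^ l = (1 / (n : ℝ)) ^ k * (1 / (n : ℝ)) ^ (l - k) := by
          rw [← pow_add, Nat.add_sub_cancel' hkl]
        have h1' : (1 / (n : ℝ)) ^ k *
            (g (1 / (n : ℝ)) * Real.log n + (1 / (n : ℝ)) ^ (l - k) * h (1 / (n : ℝ)))
            = (1 / (n : ℝ)) ^ k * 0 := by
          rw [mul_zero, ← h1, hsplit]; ring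
        have h2' := mul_left_cancel₀ hpk h1'
        have hgl : g (1 / (n : ℝ)) * Real.log n
            = -((1 / (n : ℝ)) ^ (l - k) * h (1 / (n : ℝ))) := by linarith
        have hexp : g (1 / (n : ℝ))
            = g (1 / (n : ℝ)) * Real.log n * (Real.log n)⁻¹ := by
          field_simp
        rw [hexp, hgl]; ring
      have hlim : Tendsto (fun n : ℕ =>
          -((1 / (n : ℝ)) ^ (l - k) * h (1 / (n : ℝ)) * (Real.log n)⁻¹)) atTop (𝓝 0) := by
        have t1 : Tendsto (fun n : ℕ => (1 / (n : ℝ)) ^ (l - k)) atTop (𝓝 ((0:ℝ) ^ (l - k))) :=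
          tendsto_inv_nat.pow _
        have t2 : Tendsto (fun n : ℕ => (Real.log n)⁻¹) atTop (𝓝 0) :=
          tendsto_log_nat.inv_tendsto_atTop
        have := ((t1.mul th).mul t2).neg
        simpa using this
      have tg0 : Tendsto (fun n : ℕ => g (1 / (n : ℝ))) atTop (𝓝 0) :=
        hlim.congr' (heq.mono fun _ hn => hn.symm)
      exact hg0 (tendsto_nhds_unique tg tg0)
    · -- l < k : h(1/n) → 0, contradiction with h 0 ≠ 0
      have heq : ∀ᶠ n : ℕ in atTop,
          h (1 / (n : ℝ)) =
            -((1 / (n : ℝ)) ^ (k - l - 1) * (Real.log n / n) * g (1 / (n : ℝ))) := by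
        filter_upwards [hrel2, eventually_nat_ne] with n h1 hn0
        have hpl : (1 / (n : ℝ)) ^ l ≠ 0 := by positivity
        have hsplit : (1 / (n : ℝ)) ^ k
            = (1 / (n : ℝ)) ^ l * ((1 / (n : ℝ)) ^ (k - l - 1) * (1 / (n : ℝ))) := by
          rw [← pow_succ, ← pow_add]
          congr 1
          omega
        have h1' : (1 / (n : ℝ)) ^ l *
            ((1 / (n : ℝ)) ^ (k - l - 1) * (1 / (n : ℝ)) * g (1 / (n : ℝ)) * Real.log n
              + h (1 / (n : ℝ))) = (1 / (n : ℝ)) ^ l * 0 := by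
          rw [mul_zero, ← h1, hsplit]; ring
        have h2' := mul_left_cancel₀ hpl h1'
        linear_combination h2'
      have hlim : Tendsto (fun n : ℕ =>
          -((1 / (n : ℝ)) ^ (k - l - 1) * (Real.log n / n) * g (1 / (n : ℝ)))) atTop (𝓝 0) := by
        have t1 : Tendsto (fun n : ℕ => (1 / (n : ℝ)) ^ (k - l - 1)) atTop
            (𝓝 ((0:ℝ) ^ (k - l - 1))) := tendsto_inv_nat.pow _
        have := ((t1.mul tendsto_log_div_nat).mul tg).neg
        simpa using this
      have th0 : Tendsto (fun n : ℕ => h (1 / (n : ℝ))) atTop (𝓝 0) :=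
        hlim.congr' (heq.mono fun _ hn => hn.symm)
      exact hh0 (tendsto_nhds_unique th th0)


noncomputable def realPoly (φ : ℂ →ₗ[ℝ] ℝ) (p : Polynomial ℂ) : Polynomial ℝ :=
  ∑ i ∈ range (p.natDegree + 1), Polynomial.C (φ (p.coeff i)) * Polynomial.X ^ i

lemma realPoly_eval (φ : ℂ →ₗ[ℝ] ℝ) (p : Polynomial ℂ) (x : ℝ) :
    (realPoly φ p).eval x = φ (p.eval ((x : ℝ) : ℂ)) := by
  rw [Polynomial.eval_eq_sum_range (x := ((x : ℝ) : ℂ)), map_sum, realPoly,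
    Polynomial.eval_finset_sum]
  refine Finset.sum_congr rfl fun i _ => ?_
  rw [Polynomial.eval_mul, Polynomial.eval_C, Polynomial.eval_pow, Polynomial.eval_X]
  have hx : p.coeff i * ((x : ℝ) : ℂ) ^ i = (x ^ i : ℝ) • p.coeff i := by
    rw [Complex.real_smul]; push_cast; ring
  rw [hx, map_smul, smul_eq_mul, mul_comm]

lemma realPoly_coeff (φ : ℂ →ₗ[ℝ] ℝ) (p : Polynomial ℂ) :
    (realPoly φ p).coeff p.natDegree = φ (p.coeff p.natDegree) := by
  rw [realPoly, Polynomial.finset_sum_coeff, Finset.sum_eq_single p.natDegree]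
  · simp
  · intro b _ hb
    simp [Polynomial.coeff_C_mul, Polynomial.coeff_X_pow, Ne.symm hb]
  · intro h
    exact absurd (self_mem_range_succ _) h

end Aux

/-- The sequence `log n` (with `log 0 = 0`) is not holonomic. -/
theorem log_not_holonomic :
    ¬ HolonomicSeq (fun n : ℕ => (Real.log n : ℂ)) := by
  classical
  open Filter Polynomial Topology in
  rintro ⟨d, p, hp0, hrec⟩
  -- choose a real-linear functional not killing the leading coefficient of `p 0`
  obtain ⟨φ, hφ⟩ : ∃ φ : ℂ →ₗ[ℝ] ℝ, φ ((p 0).coeff (p 0).natDegree) ≠ 0 := by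
    have hc : (p 0).coeff (p 0).natDegree ≠ 0 := by
      rw [← Polynomial.leadingCoeff]
      exact Polynomial.leadingCoeff_ne_zero.mpr hp0
    by_cases hre : ((p 0).coeff (p 0).natDegree).re ≠ 0
    · exact ⟨Complex.reCLM.toLinearMap, hre⟩
    · refine ⟨Complex.imCLM.toLinearMap, fun him => ?_⟩
      rw [not_not] at hre
      exact hc (Complex.ext hre him)
  set q : ℕ → Polynomial ℝ := fun j => realPoly φ (p j) with hqdef
  have hq0 : q 0 ≠ 0 := by
    intro h
    apply hφ
    have := congrArg (fun r : Polynomial ℝ => r.coeff ((p 0).natDegree)) h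
    simpa [hqdef, realPoly_coeff] using this
  have hqrel : ∀ n : ℕ,
      ∑ j ∈ range (d + 1), (q j).eval (n : ℝ)
        * Real.log ((n : ℝ) + ((d - j : ℕ) : ℝ)) = 0 := by
    intro n
    have h0 := congrArg φ (hrec n)
    rw [map_sum, map_zero] at h0
    rw [← h0]
    refine Finset.sum_congr rfl fun j hj => ?_
    have hsm : (p j).eval (n : ℂ) * ((Real.log (((n + (d - j) : ℕ) : ℝ)) : ℝ) : ℂ)
        = Real.log (((n + (d - j) : ℕ) : ℝ)) • (p j).eval (n : ℂ) := by
      rw [Complex.real_smul]; ring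
    rw [hsm, map_smul, smul_eq_mul]
    have hcast : ((n : ℕ) : ℂ) = (((n : ℕ) : ℝ) : ℂ) := by push_cast; rfl
    rw [hcast, ← realPoly_eval φ (p j) ((n : ℕ) : ℝ),
      show realPoly φ (p j) = q j from rfl]
    push_cast
    ring
  -- the reversed polynomials
  set D := ∑ j ∈ range (d + 1), (q j).natDegree with hDdef
  have hD : ∀ j ∈ range (d + 1), (q j).natDegree < D + 1 := fun j hj =>
    Nat.lt_succ_of_le
      (Finset.single_le_sum (f := fun j => (q j).natDegree) (fun _ _ => Nat.zero_le _) hj)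
  set P : ℕ → Polynomial ℝ := fun j =>
    ∑ i ∈ range (D + 1), Polynomial.C ((q j).coeff i) * Polynomial.X ^ (D - i) with hPdef
  have hPq : ∀ j ∈ range (d + 1), ∀ x : ℝ, x ≠ 0 →
      (q j).eval x = x ^ D * (P j).eval x⁻¹ := by
    intro j hj x hx
    rw [Polynomial.eval_eq_sum_range' (hD j hj), hPdef, Polynomial.eval_finset_sum,
      Finset.mul_sum]
    refine Finset.sum_congr rfl fun i hi => ?_
    rw [Polynomial.eval_mul, Polynomial.eval_C, Polynomial.eval_pow, Polynomial.eval_X]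
    have hiD : i ≤ D := Nat.lt_succ_iff.mp (mem_range.mp hi)
    have hsp : x ^ D = x ^ i * x ^ (D - i) := by
      rw [← pow_add, Nat.add_sub_cancel' hiD]
    rw [hsp, inv_pow]
    have hne : x ^ (D - i) ≠ 0 := pow_ne_zero _ hx
    field_simp
  have hPzero : ∀ j ∈ range (d + 1), P j = 0 → q j = 0 := by
    intro j hj h
    apply Polynomial.eq_zero_of_infinite_isRoot
    refine Set.Infinite.mono ?_ (Set.Ioi_infinite (0 : ℝ))
    intro x hx
    have hx0 : x ≠ 0 := ne_of_gt hx
    show (q j).IsRoot x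
    rw [Polynomial.IsRoot, hPq j hj x hx0, h]
    simp
  set A : Polynomial ℝ := ∑ j ∈ range (d + 1), P j with hAdef
  set B : ℝ → ℝ := fun z =>
    ∑ j ∈ range (d + 1), (P j).eval z * Real.log (1 + ((d - j : ℕ) : ℝ) * z) with hBdef
  have hBan : ∀ z : ℝ, (∀ j ∈ range (d + 1), 0 < 1 + ((d - j : ℕ) : ℝ) * z) →
      AnalyticAt ℝ B z := by
    intro z hz
    apply Finset.analyticAt_fun_sum
    intro j hj
    refine (polyAnalyticAt (P j) z).fun_mul ?_
    have hin : AnalyticAt ℝ (fun w : ℝ => 1 + ((d - j : ℕ) : ℝ) * w) z :=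
      analyticAt_const.add (analyticAt_const.mul analyticAt_id)
    have := AnalyticAt.comp (g := Real.log)
      (f := fun w : ℝ => 1 + ((d - j : ℕ) : ℝ) * w) (x := z)
      (analyticAt_rlog (hz j hj)) hin
    simpa [Function.comp_def] using this
  have hAB : ∀ᶠ n : ℕ in Filter.atTop,
      A.eval (1 / (n : ℝ)) * Real.log n + B (1 / (n : ℝ)) = 0 := by
    filter_upwards [Filter.eventually_ge_atTop 1] with n hn
    have hnpos : (0 : ℝ) < n := by exact_mod_cast hn
    have hn0 : (n : ℝ) ≠ 0 := ne_of_gt hnpos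
    have expand : ∀ j ∈ range (d + 1),
        (q j).eval (n : ℝ) * Real.log ((n : ℝ) + ((d - j : ℕ) : ℝ))
        = (n : ℝ) ^ D * ((P j).eval (1 / (n : ℝ)) * Real.log n
            + (P j).eval (1 / (n : ℝ)) * Real.log (1 + ((d - j : ℕ) : ℝ) * (1 / (n : ℝ)))) := by
      intro j hj
      have hpos2 : (0 : ℝ) < 1 + ((d - j : ℕ) : ℝ) * (1 / (n : ℝ)) := by positivity
      have hfac : (n : ℝ) + ((d - j : ℕ) : ℝ)
          = (n : ℝ) * (1 + ((d - j : ℕ) : ℝ) * (1 / (n : ℝ))) := by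
        field_simp
      rw [hfac, Real.log_mul hn0 (ne_of_gt hpos2), hPq j hj (n : ℝ) hn0, one_div]
      ring
    have key : (n : ℝ) ^ D * (A.eval (1 / (n : ℝ)) * Real.log n + B (1 / (n : ℝ))) = 0 := by
      calc (n : ℝ) ^ D * (A.eval (1 / (n : ℝ)) * Real.log n + B (1 / (n : ℝ)))
          = ∑ j ∈ range (d + 1),
            (q j).eval (n : ℝ) * Real.log ((n : ℝ) + ((d - j : ℕ) : ℝ)) := by
            rw [Finset.sum_congr rfl expand, ← Finset.mul_sum]
            congr 1
            rw [Finset.sum_add_distrib, ← Finset.sum_mul, hAdef, hBdef,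
              Polynomial.eval_finset_sum]
        _ = 0 := hqrel n
    have hpow : ((n : ℝ)) ^ D ≠ 0 := pow_ne_zero _ hn0
    exact (mul_eq_zero.mp key).resolve_left hpow
  have hA0 : A = 0 := key_lemma A B (hBan 0 (by intro j hj; simp)) hAB
  have hB0 : ∀ᶠ n : ℕ in Filter.atTop, B (1 / (n : ℝ)) = 0 := by
    filter_upwards [hAB] with n hn
    rwa [hA0, Polynomial.eval_zero, zero_mul, zero_add] at hn
  by_cases hd : d = 0
  · subst hd
    apply hq0
    apply hPzero 0 (by simp)
    have hP0A : A = P 0 := by rw [hAdef, Finset.sum_range_one]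
    rw [← hP0A, hA0]
  · have hdpos : 0 < d := Nat.pos_of_ne_zero hd
    have hdR : (0 : ℝ) < d := by exact_mod_cast hdpos
    have hposU : ∀ z ∈ Set.Ioi (-(1 / (d : ℝ))), ∀ j ∈ range (d + 1),
        0 < 1 + ((d - j : ℕ) : ℝ) * z := by
      intro z hz j hj
      have hzgt : -(1 / (d : ℝ)) < z := hz
      have haj : ((d - j : ℕ) : ℝ) ≤ (d : ℝ) := by exact_mod_cast Nat.sub_le d j
      have ha0 : (0 : ℝ) ≤ ((d - j : ℕ) : ℝ) := Nat.cast_nonneg _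
      rcases le_or_gt 0 z with hz0 | hz0
      · have := mul_nonneg ha0 hz0
        linarith
      · have h1 : ((d - j : ℕ) : ℝ) * z ≥ (d : ℝ) * z := by nlinarith
        have h2 : (d : ℝ) * z > -1 := by
          have h3 : (d : ℝ) * (-(1 / (d : ℝ))) = -1 := by field_simp
          nlinarith
        linarith
    have hBU : AnalyticOnNhd ℝ B (Set.Ioi (-(1 / (d : ℝ)))) :=
      fun z hz => hBan z (hposU z hz)
    have h0U : (0 : ℝ) ∈ Set.Ioi (-(1 / (d : ℝ))) := by
      simp only [Set.mem_Ioi]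
      have : (0 : ℝ) < 1 / (d : ℝ) := by positivity
      linarith
    have hfreq : ∃ᶠ z in nhdsWithin (0 : ℝ) {(0 : ℝ)}ᶜ, B z = 0 := by
      have ht : Filter.Tendsto (fun n : ℕ => 1 / (n : ℝ)) Filter.atTop
          (nhdsWithin (0 : ℝ) {(0 : ℝ)}ᶜ) := by
        rw [tendsto_nhdsWithin_iff]
        refine ⟨tendsto_inv_nat, ?_⟩
        filter_upwards [Filter.eventually_ge_atTop 1] with n hn
        have hnpos : (0 : ℝ) < n := by exact_mod_cast hn
        simp only [Set.mem_compl_iff, Set.mem_singleton_iff]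
        positivity
      exact ht.frequently hB0.frequently
    have hBzero : Set.EqOn B 0 (Set.Ioi (-(1 / (d : ℝ)))) :=
      hBU.eqOn_zero_of_preconnected_of_frequently_eq_zero isPreconnected_Ioi h0U hfreq
    -- translate to the singular point `-1/d`
    set G : ℝ → ℝ := fun t => ∑ j ∈ range d, (P (j + 1)).eval (-(1 / (d : ℝ)) + t)
        * Real.log (1 + ((d - (j + 1) : ℕ) : ℝ) * (-(1 / (d : ℝ)) + t)) with hGdef
    have hposG : ∀ j, 0 < 1 + ((d - (j + 1) : ℕ) : ℝ) * (-(1 / (d : ℝ)) + 0) := by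
      intro j
      have h1 : ((d - (j + 1) : ℕ) : ℝ) ≤ ((d - 1 : ℕ) : ℝ) := by
        exact_mod_cast Nat.sub_le_sub_left (by omega) d
      have h2 : ((d - 1 : ℕ) : ℝ) = (d : ℝ) - 1 := by
        rw [Nat.cast_sub hdpos]; simp
      have ha0 : (0 : ℝ) ≤ ((d - (j + 1) : ℕ) : ℝ) := Nat.cast_nonneg _
      have h3 : ((d - (j + 1) : ℕ) : ℝ) * (1 / (d : ℝ)) ≤ ((d : ℝ) - 1) * (1 / (d : ℝ)) := by
        apply mul_le_mul_of_nonneg_right (by rw [← h2]; exact h1) (by positivity)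
      have h4 : ((d : ℝ) - 1) * (1 / (d : ℝ)) < 1 := by
        rw [mul_one_div]
        exact (div_lt_one hdR).mpr (by linarith)
      nlinarith
    have hGan : AnalyticAt ℝ G 0 := by
      apply Finset.analyticAt_fun_sum
      intro j hj
      have hin1 : AnalyticAt ℝ (fun t : ℝ => -(1 / (d : ℝ)) + t) 0 :=
        analyticAt_const.add analyticAt_id
      have hp1 := AnalyticAt.comp (g := fun y : ℝ => (P (j + 1)).eval y)
        (f := fun t : ℝ => -(1 / (d : ℝ)) + t) (x := 0)
        (polyAnalyticAt (P (j + 1)) (-(1 / (d : ℝ)) + 0)) hin1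
      have hin2 : AnalyticAt ℝ
          (fun t : ℝ => 1 + ((d - (j + 1) : ℕ) : ℝ) * (-(1 / (d : ℝ)) + t)) 0 :=
        analyticAt_const.add (analyticAt_const.mul (analyticAt_const.add analyticAt_id))
      have hl1 := AnalyticAt.comp (g := Real.log)
        (f := fun t : ℝ => 1 + ((d - (j + 1) : ℕ) : ℝ) * (-(1 / (d : ℝ)) + t)) (x := 0)
        (analyticAt_rlog (hposG j)) hin2
      have := hp1.fun_mul hl1
      simpa [Function.comp_def] using this
    set At : Polynomial ℝ := -((P 0).comp (Polynomial.C (-(1 / (d : ℝ))) + Polynomial.X))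
      with hAtdef
    set Bt : ℝ → ℝ := fun t => (P 0).eval (-(1 / (d : ℝ)) + t) * Real.log d + G t with hBtdef
    have hBtan : AnalyticAt ℝ Bt 0 := by
      refine AnalyticAt.add ?_ hGan
      have hin1 : AnalyticAt ℝ (fun t : ℝ => -(1 / (d : ℝ)) + t) 0 :=
        analyticAt_const.add analyticAt_id
      have hp1 := AnalyticAt.comp (g := fun y : ℝ => (P 0).eval y)
        (f := fun t : ℝ => -(1 / (d : ℝ)) + t) (x := 0)
        (polyAnalyticAt (P 0) (-(1 / (d : ℝ)) + 0)) hin1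
      have := hp1.fun_mul (analyticAt_const (v := Real.log d))
      simpa [Function.comp_def] using this
    have hrel3 : ∀ᶠ n : ℕ in Filter.atTop,
        At.eval (1 / (n : ℝ)) * Real.log n + Bt (1 / (n : ℝ)) = 0 := by
      filter_upwards [Filter.eventually_ge_atTop 1] with n hn
      have hnpos : (0 : ℝ) < n := by exact_mod_cast hn
      have hn0 : (n : ℝ) ≠ 0 := ne_of_gt hnpos
      have hzU : -(1 / (d : ℝ)) + 1 / (n : ℝ) ∈ Set.Ioi (-(1 / (d : ℝ))) := by
        simp only [Set.mem_Ioi]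
        have : (0 : ℝ) < 1 / (n : ℝ) := by positivity
        linarith
      have hBz := hBzero hzU
      simp only [Pi.zero_apply, hBdef] at hBz
      rw [Finset.sum_range_succ'] at hBz
      have hGz : G (1 / (n : ℝ)) = ∑ j ∈ range d,
          (P (j + 1)).eval (-(1 / (d : ℝ)) + 1 / (n : ℝ))
          * Real.log (1 + ((d - (j + 1) : ℕ) : ℝ) * (-(1 / (d : ℝ)) + 1 / (n : ℝ))) := rfl
      rw [← hGz] at hBz
      have hlog0 : 1 + ((d - 0 : ℕ) : ℝ) * (-(1 / (d : ℝ)) + 1 / (n : ℝ))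
          = (d : ℝ) / (n : ℝ) := by
        simp only [Nat.sub_zero]
        field_simp
        ring
      rw [hlog0, Real.log_div (ne_of_gt hdR) hn0] at hBz
      simp only [hAtdef, hBtdef, Polynomial.eval_neg, Polynomial.eval_comp,
        Polynomial.eval_add, Polynomial.eval_C, Polynomial.eval_X]
      ring_nf at hBz ⊢
      linarith
    have hAt0 : At = 0 := key_lemma At Bt hBtan hrel3
    have hP0 : P 0 = 0 := by
      refine Polynomial.funext fun y => ?_
      have h5 : At.eval (y + 1 / (d : ℝ)) = 0 := by rw [hAt0]; simp
      rw [hAtdef] at h5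
      simp only [Polynomial.eval_neg, Polynomial.eval_comp, Polynomial.eval_add,
        Polynomial.eval_C, Polynomial.eval_X, neg_eq_zero] at h5
      have harg : -(1 / (d : ℝ)) + (y + 1 / (d : ℝ)) = y := by ring
      rw [harg] at h5
      simpa using h5
    exact hq0 (hPzero 0 (by simp) hP0)
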